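/- Fix $\gamma > 0$ and $\tilde B > 0$. Let $\tilde\alpha_1(\theta)$ be, for $\theta$ near $0$, the real root of the cubic $T(Y)$ (as defined with $\gamma_\theta = \gamma\sin(2\pi\theta)$) satisfying $\tilde\alpha_1(\theta) \in (-\gamma^2, 0)$ and $\tilde\alpha_1(0) = 0$. Then $\lim_{\theta \to 0}\frac{\tilde\alpha_1(\theta)}{\sin^2(2\pi\theta)} = -\frac{\gamma^2(2\tilde B^2 + 1)}{(\tilde B^2 + 1)^2}$. -/

import Mathlib

open Real Filter Topology

/-- asymptotics of the root branch α̃₁(θ) of the cubic T near θ = 0. -/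
theorem stmt11 (γ Bt : ℝ) (hγ : 0 < γ) (hBt : 0 < Bt)
    (α : ℝ → ℝ)
    (hroot : ∀ᶠ θ in 𝓝[>] (0:ℝ),
      α θ ∈ Set.Ioo (-γ^2) 0 ∧
      (α θ)^3 + 2*(1 + Bt^2 + (γ*Real.sin (2*π*θ))^2)*(α θ)^2 +
        (Bt^4 + 2*(1 + (γ*Real.sin (2*π*θ))^2)*Bt^2 + Real.cos (2*π*θ)^2 +
          4*(γ*Real.sin (2*π*θ))^2 + (γ*Real.sin (2*π*θ))^4)*(α θ) +
        2*Bt^2*(γ*Real.sin (2*π*θ))^2 +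
          (γ*Real.sin (2*π*θ))^2*Real.cos (2*π*θ)^2 + 2*(γ*Real.sin (2*π*θ))^4 = 0)
    (hα0 : α 0 = 0)
    (hcont : Tendsto α (𝓝[>] (0:ℝ)) (𝓝 0)) :
    Tendsto (fun θ => α θ / Real.sin (2*π*θ)^2) (𝓝[>] (0:ℝ))
      (𝓝 (-(γ^2*(2*Bt^2 + 1))/(Bt^2 + 1)^2)) := by
  have hs : Tendsto (fun θ : ℝ => Real.sin (2*π*θ)) (𝓝[>] (0:ℝ)) (𝓝 0) := by
    have hc : Continuous fun θ : ℝ => Real.sin (2*π*θ) := by continuity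
    have := (hc.tendsto 0).mono_left (nhdsWithin_le_nhds (s := Set.Ioi (0:ℝ)))
    simpa using this
  have hD : ∀ᶠ θ in 𝓝[>] (0:ℝ), (α θ + Bt^2 + 1) ≠ 0 := by
    have h1 : ∀ᶠ θ in 𝓝[>] (0:ℝ), α θ ∈ Set.Ioi (-1:ℝ) :=
      hcont (Ioi_mem_nhds (by norm_num))
    filter_upwards [h1] with θ hθ
    have : -1 < α θ := hθ
    nlinarith [sq_nonneg Bt]
  have hsne : ∀ᶠ θ in 𝓝[>] (0:ℝ), Real.sin (2*π*θ) ≠ 0 := by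
    have hmem : Set.Ioo (0:ℝ) (1/4) ∈ 𝓝[>] (0:ℝ) :=
      Ioo_mem_nhdsGT_of_mem (by constructor <;> norm_num)
    filter_upwards [hmem] with θ hθ
    obtain ⟨h0, h1⟩ := hθ
    have hπ := Real.pi_pos
    have hpos : 0 < 2*π*θ := by positivity
    have hlt : 2*π*θ < π := by nlinarith
    exact ne_of_gt (Real.sin_pos_of_pos_of_lt_pi hpos hlt)
  have key : ∀ᶠ θ in 𝓝[>] (0:ℝ),
      (fun θ => (α θ - 2*γ^2*(α θ)^2 - (2*Bt^2+4)*γ^2*(α θ)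
        - γ^4*Real.sin (2*π*θ)^2*(α θ)
        - 2*Bt^2*γ^2 - γ^2*(1 - Real.sin (2*π*θ)^2) - 2*γ^4*Real.sin (2*π*θ)^2)
        / (α θ + Bt^2 + 1)^2) θ
      = (fun θ => α θ / Real.sin (2*π*θ)^2) θ := by
    filter_upwards [hroot, hD, hsne] with θ hr hDθ hsθ
    obtain ⟨hmem, heq⟩ := hr
    have hc : Real.cos (2*π*θ)^2 = 1 - Real.sin (2*π*θ)^2 := Real.cos_sq' _
    rw [hc] at heq
    rw [eq_comm, div_eq_div_iff (pow_ne_zero 2 hsθ) (pow_ne_zero 2 hDθ)]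
    linear_combination heq
  refine Tendsto.congr' key ?_
  have hs2 : Tendsto (fun θ : ℝ => Real.sin (2*π*θ)^2) (𝓝[>] (0:ℝ)) (𝓝 0) := by
    simpa using hs.pow 2
  have t1 : Tendsto (fun θ => 2*γ^2*(α θ)^2) (𝓝[>] (0:ℝ)) (𝓝 0) := by
    simpa using (hcont.pow 2).const_mul (2*γ^2)
  have t2 : Tendsto (fun θ => (2*Bt^2+4)*γ^2*(α θ)) (𝓝[>] (0:ℝ)) (𝓝 0) := by
    simpa using hcont.const_mul ((2*Bt^2+4)*γ^2)
  have t3 : Tendsto (fun θ => γ^4*Real.sin (2*π*θ)^2*(α θ)) (𝓝[>] (0:ℝ)) (𝓝 0) := by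
    simpa using (hs2.const_mul (γ^4)).mul hcont
  have t4 : Tendsto (fun θ => γ^2*(1 - Real.sin (2*π*θ)^2)) (𝓝[>] (0:ℝ)) (𝓝 (γ^2)) := by
    have := ((tendsto_const_nhds (α := ℝ) (x := (1:ℝ))).sub hs2).const_mul (γ^2)
    simpa using this
  have t5 : Tendsto (fun θ => 2*γ^4*Real.sin (2*π*θ)^2) (𝓝[>] (0:ℝ)) (𝓝 0) := by
    simpa using hs2.const_mul (2*γ^4)
  have tc : Tendsto (fun _ : ℝ => 2*Bt^2*γ^2) (𝓝[>] (0:ℝ)) (𝓝 (2*Bt^2*γ^2)) :=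
    tendsto_const_nhds
  have hnum : Tendsto (fun θ => α θ - 2*γ^2*(α θ)^2 - (2*Bt^2+4)*γ^2*(α θ)
      - γ^4*Real.sin (2*π*θ)^2*(α θ)
      - 2*Bt^2*γ^2 - γ^2*(1 - Real.sin (2*π*θ)^2) - 2*γ^4*Real.sin (2*π*θ)^2)
      (𝓝[>] (0:ℝ)) (𝓝 (-(2*Bt^2*γ^2) - γ^2)) := by
    have h := (((((hcont.sub t1).sub t2).sub t3).sub tc).sub t4).sub t5
    convert h using 2
    ring
  have hden : Tendsto (fun θ => (α θ + Bt^2 + 1)^2) (𝓝[>] (0:ℝ))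
      (𝓝 ((Bt^2 + 1)^2)) := by
    have h := ((hcont.add (tendsto_const_nhds (x := Bt^2))).add
      (tendsto_const_nhds (x := (1:ℝ)))).pow 2
    simpa using h
  have hdne : ((Bt^2 + 1)^2 : ℝ) ≠ 0 := by positivity
  have h := hnum.div hden hdne
  convert h using 2
  · rfl
  · ring
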